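/- arXiv:2410.08095 — 3 statements merged into one kernel-verified Lean document; each statement's English description precedes it below -/
import Mathlib

section
/- In the recursive construction of the intermediate vector, the indices strictly decrease and the ratios strictly increase: the recursion terminates at some finite k with d+1 = l_0 > l_1 > l_2 > ⋯ > l_k = 1, and 0 < q_1 < q_2 < ⋯ < q_k. -/
open Finset

/-- Tail-sum coherence monotone `C_l(p) = ∑_{i=l}^d p_i`, for a vector with (1-based)
entries `p 1, …, p d`.  Note `Cm d p (d+1) = 0` automatically. -/
noncomputable def Cm (d : ℕ) (p : ℕ → ℝ) (l : ℕ) : ℝ := ∑ i ∈ Finset.Icc l d, p i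

/-- `p` is a descending probability vector on the (1-based) index range `{1, …, d}`. -/
structure DescProb (d : ℕ) (p : ℕ → ℝ) : Prop where
  nonneg : ∀ i, 1 ≤ i → i ≤ d → 0 ≤ p i
  anti : ∀ i j, 1 ≤ i → i ≤ j → j ≤ d → p j ≤ p i
  sum_one : ∑ i ∈ Finset.Icc 1 d, p i = 1

/-- `p ≺ q` : `p` is majorized by `q` (both regarded as descending vectors on `{1, …, d}`). -/
def MajorizedBy (d : ℕ) (p q : ℕ → ℝ) : Prop :=
  (∀ k, 1 ≤ k → k ≤ d → ∑ i ∈ Finset.Icc 1 k, p i ≤ ∑ i ∈ Finset.Icc 1 k, q i) ∧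
    ∑ i ∈ Finset.Icc 1 d, p i = ∑ i ∈ Finset.Icc 1 d, q i

/-- The ratio `(C_l(ψ) - C_prev(ψ)) / (C_l(φ) - C_prev(φ))` appearing in the recursive
construction of the intermediate vector. -/
noncomputable def ratio (d : ℕ) (ψ φ : ℕ → ℝ) (prev l : ℕ) : ℝ :=
  (Cm d ψ l - Cm d ψ prev) / (Cm d φ l - Cm d φ prev)

/-- One step of the recursion: the minimal ratio over `l ∈ {1, …, prev - 1}`. -/
noncomputable def stepQ (d : ℕ) (ψ φ : ℕ → ℝ) (prev : ℕ) : ℝ :=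
  sInf {x : ℝ | ∃ l, 1 ≤ l ∧ l ≤ prev - 1 ∧ x = ratio d ψ φ prev l}

/-- One step of the recursion: the smallest `l ∈ {1, …, prev - 1}` attaining the minimal
ratio. -/
noncomputable def stepL (d : ℕ) (ψ φ : ℕ → ℝ) (prev : ℕ) : ℕ :=
  sInf {l : ℕ | 1 ≤ l ∧ l ≤ prev - 1 ∧ ratio d ψ φ prev l = stepQ d ψ φ prev}

/-- The sequence of indices `l_0 = d + 1 > l_1 > l_2 > ⋯` of the recursive construction. -/
noncomputable def Lseq (d : ℕ) (ψ φ : ℕ → ℝ) : ℕ → ℕ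
  | 0 => d + 1
  | j + 1 => stepL d ψ φ (Lseq d ψ φ j)

/-- The sequence of ratios `q_1 < q_2 < ⋯` of the recursive construction (`Qseq d ψ φ j`
is `q_j` for `j ≥ 1`; the value at `0` is irrelevant). -/
noncomputable def Qseq (d : ℕ) (ψ φ : ℕ → ℝ) : ℕ → ℝ
  | 0 => 1
  | j + 1 => stepQ d ψ φ (Lseq d ψ φ j)

/-- The terminating step `k` of the recursion: the first index `j` with `l_j = 1`. -/
noncomputable def kstop (d : ℕ) (ψ φ : ℕ → ℝ) : ℕ := sInf {j : ℕ | Lseq d ψ φ j = 1}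

/-- The intermediate vector `φ^f`, with `φ^f_i = q_j φ_i` for `i ∈ {l_j, …, l_{j-1} - 1}`
(for `i ∈ {1, …, d}`, the smallest `j` with `l_j ≤ i` is precisely the `j` with
`l_j ≤ i ≤ l_{j-1} - 1`). -/
noncomputable def phif (d : ℕ) (ψ φ : ℕ → ℝ) (i : ℕ) : ℝ :=
  Qseq d ψ φ (sInf {j : ℕ | Lseq d ψ φ j ≤ i}) * φ i

section Aux

lemma Cm_sub (d : ℕ) (p : ℕ → ℝ) {l prev : ℕ} (hlp : l ≤ prev) (hp : prev ≤ d + 1) :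
    Cm d p l - Cm d p prev = ∑ i ∈ Finset.Ico l prev, p i := by
  have h1 : Cm d p l = ∑ i ∈ Finset.Ico l (d + 1), p i := by
    rw [Cm, Finset.Ico_add_one_right_eq_Icc]
  have h2 : Cm d p prev = ∑ i ∈ Finset.Ico prev (d + 1), p i := by
    rw [Cm, Finset.Ico_add_one_right_eq_Icc]
  have h3 := Finset.sum_Ico_consecutive p hlp hp
  rw [h1, h2, ← h3]; ring

lemma Cm_sub_pos (d : ℕ) (p : ℕ → ℝ) (hpos : ∀ i, 1 ≤ i → i ≤ d → 0 < p i)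
    {l prev : ℕ} (h1 : 1 ≤ l) (hlp : l < prev) (hp : prev ≤ d + 1) :
    0 < Cm d p l - Cm d p prev := by
  rw [Cm_sub d p hlp.le hp]
  apply Finset.sum_pos
  · intro i hi
    simp only [Finset.mem_Ico] at hi
    exact hpos i (le_trans h1 hi.1) (by omega)
  · exact ⟨l, Finset.mem_Ico.mpr ⟨le_refl _, hlp⟩⟩

variable (d : ℕ) (ψ φ : ℕ → ℝ)

lemma ratio_pos (hψpos : ∀ i, 1 ≤ i → i ≤ d → 0 < ψ i)
    (hφpos : ∀ i, 1 ≤ i → i ≤ d → 0 < φ i)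
    {prev l : ℕ} (h1 : 1 ≤ l) (hl : l < prev) (hp : prev ≤ d + 1) :
    0 < ratio d ψ φ prev l :=
  div_pos (Cm_sub_pos d ψ hψpos h1 hl hp) (Cm_sub_pos d φ hφpos h1 hl hp)

lemma ratioSet_finite (prev : ℕ) :
    {x : ℝ | ∃ l, 1 ≤ l ∧ l ≤ prev - 1 ∧ x = ratio d ψ φ prev l}.Finite := by
  have hsub : {x : ℝ | ∃ l, 1 ≤ l ∧ l ≤ prev - 1 ∧ x = ratio d ψ φ prev l}
      ⊆ (ratio d ψ φ prev) '' (Set.Icc 1 (prev - 1)) := by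
    rintro x ⟨l, h1, h2, rfl⟩; exact ⟨l, ⟨h1, h2⟩, rfl⟩
  exact ((Set.finite_Icc _ _).image _).subset hsub

lemma ratioSet_nonempty {prev : ℕ} (hp : 2 ≤ prev) :
    {x : ℝ | ∃ l, 1 ≤ l ∧ l ≤ prev - 1 ∧ x = ratio d ψ φ prev l}.Nonempty :=
  ⟨ratio d ψ φ prev 1, 1, le_refl _, by omega, rfl⟩

lemma stepQ_mem {prev : ℕ} (hp : 2 ≤ prev) :
    ∃ l, 1 ≤ l ∧ l ≤ prev - 1 ∧ stepQ d ψ φ prev = ratio d ψ φ prev l :=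
  Set.Nonempty.csInf_mem (ratioSet_nonempty d ψ φ hp) (ratioSet_finite d ψ φ prev)

lemma stepQ_le {prev l : ℕ} (h1 : 1 ≤ l) (h2 : l ≤ prev - 1) :
    stepQ d ψ φ prev ≤ ratio d ψ φ prev l :=
  csInf_le (ratioSet_finite d ψ φ prev).bddBelow ⟨l, h1, h2, rfl⟩

lemma stepQ_pos (hψpos : ∀ i, 1 ≤ i → i ≤ d → 0 < ψ i)
    (hφpos : ∀ i, 1 ≤ i → i ≤ d → 0 < φ i)
    {prev : ℕ} (hp : 2 ≤ prev) (hpd : prev ≤ d + 1) :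
    0 < stepQ d ψ φ prev := by
  obtain ⟨l, h1, h2, he⟩ := stepQ_mem d ψ φ hp
  rw [he]
  exact ratio_pos d ψ φ hψpos hφpos h1 (by omega) hpd

lemma stepL_mem {prev : ℕ} (hp : 2 ≤ prev) :
    1 ≤ stepL d ψ φ prev ∧ stepL d ψ φ prev ≤ prev - 1 ∧
      ratio d ψ φ prev (stepL d ψ φ prev) = stepQ d ψ φ prev := by
  obtain ⟨l, h1, h2, he⟩ := stepQ_mem d ψ φ hp
  exact Nat.sInf_mem (⟨l, h1, h2, he.symm⟩ :
    {l : ℕ | 1 ≤ l ∧ l ≤ prev - 1 ∧ ratio d ψ φ prev l = stepQ d ψ φ prev}.Nonempty)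

lemma stepQ_lt {prev l : ℕ} (h1 : 1 ≤ l) (h2 : l ≤ prev - 1)
    (hlt : l < stepL d ψ φ prev) :
    stepQ d ψ φ prev < ratio d ψ φ prev l := by
  rcases (stepQ_le d ψ φ h1 h2).lt_or_eq with h | h
  · exact h
  · exfalso
    have : stepL d ψ φ prev ≤ l := Nat.sInf_le ⟨h1, h2, h.symm⟩
    omega

lemma stepQ_strict (hψpos : ∀ i, 1 ≤ i → i ≤ d → 0 < ψ i)
    (hφpos : ∀ i, 1 ≤ i → i ≤ d → 0 < φ i)
    {prev : ℕ} (hp2 : 2 ≤ prev) (hpd : prev ≤ d + 1)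
    (hL2 : 2 ≤ stepL d ψ φ prev) :
    stepQ d ψ φ prev < stepQ d ψ φ (stepL d ψ φ prev) := by
  set L := stepL d ψ φ prev with hLdef
  obtain ⟨hL1, hLp, hLr⟩ := stepL_mem d ψ φ hp2
  have hLd1 : L ≤ d + 1 := by omega
  have key : ∀ l, 1 ≤ l → l ≤ L - 1 → stepQ d ψ φ prev < ratio d ψ φ L l := by
    intro l h1 h2
    have hlL : l < L := by omega
    have hlp : l ≤ prev - 1 := by omega
    have hlt : stepQ d ψ φ prev < ratio d ψ φ prev l := stepQ_lt d ψ φ h1 hlp hlL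
    have hB : 0 < Cm d φ l - Cm d φ L := Cm_sub_pos d φ hφpos h1 hlL hLd1
    have hb : 0 < Cm d φ L - Cm d φ prev :=
      Cm_sub_pos d φ hφpos (by omega) (by omega) hpd
    have ha : Cm d ψ L - Cm d ψ prev = stepQ d ψ φ prev * (Cm d φ L - Cm d φ prev) := by
      have h := hLr
      rw [ratio, div_eq_iff (ne_of_gt hb)] at h
      linarith [h]
    have hBp : 0 < Cm d φ l - Cm d φ prev := by linarith
    have hnum : stepQ d ψ φ prev * (Cm d φ l - Cm d φ prev) < Cm d ψ l - Cm d ψ prev := by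
      rw [ratio, lt_div_iff₀ hBp] at hlt
      linarith
    rw [ratio, lt_div_iff₀ hB]
    nlinarith [ha, hnum]
  obtain ⟨h1', h2', he'⟩ := stepL_mem d ψ φ hL2
  calc stepQ d ψ φ prev < ratio d ψ φ L (stepL d ψ φ L) := key _ h1' h2'
    _ = stepQ d ψ φ L := he'

end Aux

/-- The recursion terminates at some finite `k` with
`d + 1 = l_0 > l_1 > ⋯ > l_k = 1` and `0 < q_1 < q_2 < ⋯ < q_k`. -/
theorem recursion_terminates (d : ℕ) (hd : 1 ≤ d) (ψ φ : ℕ → ℝ)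
    (hψ : DescProb d ψ) (hφ : DescProb d φ)
    (hψpos : ∀ i, 1 ≤ i → i ≤ d → 0 < ψ i) (hφpos : ∀ i, 1 ≤ i → i ≤ d → 0 < φ i) :
    ∃ k, Lseq d ψ φ k = 1 ∧ (∀ j, j < k → Lseq d ψ φ j ≠ 1) ∧
      (∀ j, j < k → Lseq d ψ φ (j + 1) < Lseq d ψ φ j) ∧
      0 < Qseq d ψ φ 1 ∧
      (∀ j, 1 ≤ j → j < k → Qseq d ψ φ j < Qseq d ψ φ (j + 1)) := by
  have hInv : ∀ j, (∀ i, i < j → Lseq d ψ φ i ≠ 1) →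
      1 ≤ Lseq d ψ φ j ∧ Lseq d ψ φ j ≤ d + 1 - j := by
    intro j
    induction j with
    | zero => intro _; simp [Lseq]
    | succ n ih =>
      intro h
      have hn := ih (fun i hi => h i (by omega))
      have hne : Lseq d ψ φ n ≠ 1 := h n (by omega)
      have h2 : 2 ≤ Lseq d ψ φ n := by omega
      obtain ⟨hs1, hs2, _⟩ := stepL_mem d ψ φ h2
      have heq : Lseq d ψ φ (n + 1) = stepL d ψ φ (Lseq d ψ φ n) := rfl
      omega
  have hne : {j : ℕ | Lseq d ψ φ j = 1}.Nonempty := by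
    by_contra h
    rw [Set.not_nonempty_iff_eq_empty] at h
    have hall : ∀ j, Lseq d ψ φ j ≠ 1 := by
      intro j hj
      have : j ∈ {j : ℕ | Lseq d ψ φ j = 1} := hj
      simp [h] at this
    have := hInv d (fun i _ => hall i)
    exact hall d (by omega)
  refine ⟨sInf {j : ℕ | Lseq d ψ φ j = 1}, Nat.sInf_mem hne, ?_, ?_, ?_, ?_⟩ <;>
    [skip; skip; skip; skip]
  case _ =>
    intro j hj heq
    have : sInf {j : ℕ | Lseq d ψ φ j = 1} ≤ j := Nat.sInf_le heq
    omega
  case _ =>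
    intro j hj
    have hmin : ∀ i, i < j → Lseq d ψ φ i ≠ 1 := by
      intro i hi heq
      have : sInf {j : ℕ | Lseq d ψ φ j = 1} ≤ i := Nat.sInf_le heq
      omega
    have hb := hInv j hmin
    have hne1 : Lseq d ψ φ j ≠ 1 := by
      intro heq
      have : sInf {j : ℕ | Lseq d ψ φ j = 1} ≤ j := Nat.sInf_le heq
      omega
    have h2 : 2 ≤ Lseq d ψ φ j := by omega
    obtain ⟨hs1, hs2, _⟩ := stepL_mem d ψ φ h2
    have heq : Lseq d ψ φ (j + 1) = stepL d ψ φ (Lseq d ψ φ j) := rfl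
    omega
  case _ =>
    have h0 : Lseq d ψ φ 0 = d + 1 := rfl
    have hq : Qseq d ψ φ 1 = stepQ d ψ φ (Lseq d ψ φ 0) := rfl
    rw [hq, h0]
    exact stepQ_pos d ψ φ hψpos hφpos (by omega) (le_refl _)
  case _ =>
    intro j hj1 hjk
    obtain ⟨m, rfl⟩ : ∃ m, j = m + 1 := ⟨j - 1, by omega⟩
    have hmin : ∀ i, i < m + 1 → Lseq d ψ φ i ≠ 1 := by
      intro i hi heq
      have : sInf {j : ℕ | Lseq d ψ φ j = 1} ≤ i := Nat.sInf_le heq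
      omega
    have hbm := hInv m (fun i hi => hmin i (by omega))
    have hnem : Lseq d ψ φ m ≠ 1 := hmin m (by omega)
    have h2m : 2 ≤ Lseq d ψ φ m := by omega
    have hdm : Lseq d ψ φ m ≤ d + 1 := by omega
    have hbm1 := hInv (m + 1) hmin
    have hnem1 : Lseq d ψ φ (m + 1) ≠ 1 := by
      intro heq
      have : sInf {j : ℕ | Lseq d ψ φ j = 1} ≤ m + 1 := Nat.sInf_le heq
      omega
    have h2m1 : 2 ≤ Lseq d ψ φ (m + 1) := by omega
    have heqL : Lseq d ψ φ (m + 1) = stepL d ψ φ (Lseq d ψ φ m) := rfl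
    have hq1 : Qseq d ψ φ (m + 1) = stepQ d ψ φ (Lseq d ψ φ m) := rfl
    have hq2 : Qseq d ψ φ (m + 1 + 1) = stepQ d ψ φ (Lseq d ψ φ (m + 1)) := rfl
    rw [hq1, hq2, heqL]
    exact stepQ_strict d ψ φ hψpos hφpos h2m hdm (heqL ▸ h2m1)
end

section
/- The initial vector is majorized by the intermediate vector of the recursive construction: C_l(ψ) ≥ C_l(φ^f) for every l ∈ {1,…,d}, i.e., ψ ≺ φ^f; moreover equality C_{l_j}(ψ) = C_{l_j}(φ^f) holds at each breakpoint l_j, j ∈ {1,…,k}. -/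
open Finset

section AuxLemmas

lemma Cm_Ico (d : ℕ) (p : ℕ → ℝ) (l : ℕ) :
    Cm d p l = ∑ i ∈ Finset.Ico l (d+1), p i := by
  rw [Cm, Finset.Ico_add_one_right_eq_Icc]

lemma Cm_diff (d : ℕ) (p : ℕ → ℝ) {l m : ℕ} (hl : l ≤ m) (hm : m ≤ d+1) :
    Cm d p l - Cm d p m = ∑ i ∈ Finset.Ico l m, p i := by
  rw [Cm_Ico, Cm_Ico, ← Finset.sum_Ico_consecutive _ hl hm]
  ring

lemma Cm_diff_pos (d : ℕ) (p : ℕ → ℝ) (hp : ∀ i, 1 ≤ i → i ≤ d → 0 < p i)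
    {l m : ℕ} (h1 : 1 ≤ l) (hl : l < m) (hm : m ≤ d+1) :
    0 < Cm d p l - Cm d p m := by
  rw [Cm_diff d p hl.le hm]
  apply Finset.sum_pos
  · intro i hi
    rw [Finset.mem_Ico] at hi
    exact hp i (le_trans h1 hi.1) (by omega)
  · exact Finset.nonempty_Ico.2 hl

lemma Cm_top (d : ℕ) (p : ℕ → ℝ) {m : ℕ} (hm : d + 1 ≤ m) : Cm d p m = 0 := by
  rw [Cm, Finset.Icc_eq_empty (by omega), Finset.sum_empty]

lemma step_spec (d : ℕ) (ψ φ : ℕ → ℝ) {prev : ℕ} (h2 : 2 ≤ prev) :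
    (1 ≤ stepL d ψ φ prev ∧ stepL d ψ φ prev ≤ prev - 1 ∧
      ratio d ψ φ prev (stepL d ψ φ prev) = stepQ d ψ φ prev) ∧
    ∀ l, 1 ≤ l → l ≤ prev - 1 → stepQ d ψ φ prev ≤ ratio d ψ φ prev l := by
  set S : Set ℝ := {x : ℝ | ∃ l, 1 ≤ l ∧ l ≤ prev - 1 ∧ x = ratio d ψ φ prev l} with hS
  have hSeq : S = (fun l => ratio d ψ φ prev l) '' (Set.Icc 1 (prev-1)) := by
    ext x
    simp only [hS, Set.mem_setOf_eq, Set.mem_image, Set.mem_Icc]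
    constructor
    · rintro ⟨l, h1, h2, rfl⟩; exact ⟨l, ⟨h1, h2⟩, rfl⟩
    · rintro ⟨l, ⟨h1, h2⟩, rfl⟩; exact ⟨l, h1, h2, rfl⟩
  have hSfin : S.Finite := hSeq ▸ (Set.finite_Icc _ _).image _
  have hSne : S.Nonempty := ⟨ratio d ψ φ prev 1, 1, le_refl 1, by omega, rfl⟩
  have hmem : stepQ d ψ φ prev ∈ S := hSne.csInf_mem hSfin
  obtain ⟨l0, hl01, hl0p, hl0r⟩ := hmem
  have hlb : ∀ l, 1 ≤ l → l ≤ prev - 1 → stepQ d ψ φ prev ≤ ratio d ψ φ prev l := by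
    intro l h1 hl
    exact csInf_le hSfin.bddBelow ⟨l, h1, hl, rfl⟩
  have hTne : {l : ℕ | 1 ≤ l ∧ l ≤ prev - 1 ∧ ratio d ψ φ prev l = stepQ d ψ φ prev}.Nonempty :=
    ⟨l0, hl01, hl0p, hl0r.symm⟩
  have hmemT := Nat.sInf_mem hTne
  exact ⟨hmemT, hlb⟩

end AuxLemmas
section Chain

variable (d : ℕ) (ψ φ : ℕ → ℝ)

lemma lreach : ∃ j, Lseq d ψ φ j = 1 := by
  have key : ∀ j : ℕ, (∃ j', Lseq d ψ φ j' = 1) ∨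
      (1 ≤ Lseq d ψ φ j ∧ Lseq d ψ φ j + j ≤ d + 1) := by
    intro j
    induction j with
    | zero => right; simp [Lseq]
    | succ j ih =>
      rcases ih with h | ⟨h1, h2⟩
      · left; exact h
      · by_cases he : Lseq d ψ φ j = 1
        · left; exact ⟨j, he⟩
        · have h2' : 2 ≤ Lseq d ψ φ j := by omega
          obtain ⟨⟨hs1, hs2, _⟩, _⟩ := step_spec d ψ φ h2'
          right
          constructor
          · exact hs1
          · show stepL d ψ φ (Lseq d ψ φ j) + (j + 1) ≤ d + 1
            omega
  rcases key (d + 1) with h | ⟨h1, h2⟩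
  · exact h
  · exact ⟨d + 1, by omega⟩

lemma kstop_spec : Lseq d ψ φ (kstop d ψ φ) = 1 := Nat.sInf_mem (lreach d ψ φ)

lemma kstop_min {j : ℕ} (hj : j < kstop d ψ φ) : Lseq d ψ φ j ≠ 1 :=
  Nat.notMem_of_lt_sInf (s := {j : ℕ | Lseq d ψ φ j = 1}) hj

lemma chain : ∀ j, j ≤ kstop d ψ φ → 1 ≤ Lseq d ψ φ j ∧ Lseq d ψ φ j ≤ d + 1 := by
  intro j
  induction j with
  | zero => intro _; simp [Lseq]
  | succ j ih =>
    intro hj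
    have hj' : j < kstop d ψ φ := by omega
    obtain ⟨h1, h2⟩ := ih hj'.le
    have h2' : 2 ≤ Lseq d ψ φ j := by
      have := kstop_min d ψ φ hj'; omega
    obtain ⟨⟨hs1, hs2, _⟩, _⟩ := step_spec d ψ φ h2'
    refine ⟨hs1, ?_⟩
    show stepL d ψ φ (Lseq d ψ φ j) ≤ d + 1
    omega

lemma chain2 {j : ℕ} (hj : j < kstop d ψ φ) : 2 ≤ Lseq d ψ φ j := by
  have := kstop_min d ψ φ hj
  have := (chain d ψ φ j hj.le).1
  omega

lemma Lseq_decr {j : ℕ} (hj : j + 1 ≤ kstop d ψ φ) :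
    Lseq d ψ φ (j + 1) < Lseq d ψ φ j := by
  have h2 := chain2 d ψ φ (show j < kstop d ψ φ by omega)
  obtain ⟨⟨hs1, hs2, _⟩, _⟩ := step_spec d ψ φ h2
  show stepL d ψ φ (Lseq d ψ φ j) < Lseq d ψ φ j
  omega

lemma Lseq_mono : ∀ j, j ≤ kstop d ψ φ → ∀ j', j' ≤ j → Lseq d ψ φ j ≤ Lseq d ψ φ j' := by
  intro j
  induction j with
  | zero =>
      intro _ j' hj'
      have : j' = 0 := by omega
      rw [this]
  | succ j ih =>
    intro hj j' hj'
    rcases Nat.eq_or_lt_of_le hj' with h | h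
    · rw [h]
    · have : j' ≤ j := by omega
      exact le_trans (Lseq_decr d ψ φ hj).le (ih (by omega) j' this)

end Chain
section Segment

variable (d : ℕ) (ψ φ : ℕ → ℝ)

lemma phif_seg {j i : ℕ} (hj : j + 1 ≤ kstop d ψ φ)
    (hi1 : Lseq d ψ φ (j + 1) ≤ i) (hi2 : i < Lseq d ψ φ j) :
    phif d ψ φ i = stepQ d ψ φ (Lseq d ψ φ j) * φ i := by
  have hmem : (j + 1) ∈ {j' : ℕ | Lseq d ψ φ j' ≤ i} := hi1
  have hne : {j' : ℕ | Lseq d ψ φ j' ≤ i}.Nonempty := ⟨j + 1, hmem⟩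
  have hinf : sInf {j' : ℕ | Lseq d ψ φ j' ≤ i} = j + 1 := by
    have h1 : sInf {j' : ℕ | Lseq d ψ φ j' ≤ i} ≤ j + 1 := Nat.sInf_le hmem
    have h2 : Lseq d ψ φ (sInf {j' : ℕ | Lseq d ψ φ j' ≤ i}) ≤ i := Nat.sInf_mem hne
    by_contra hne'
    have hlt : sInf {j' : ℕ | Lseq d ψ φ j' ≤ i} ≤ j := by omega
    have := Lseq_mono d ψ φ j (by omega) _ hlt
    omega
  rw [phif, hinf]
  rfl

lemma stepQ_mul_le {prev l : ℕ} (hφpos : ∀ i, 1 ≤ i → i ≤ d → 0 < φ i)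
    (h2 : 2 ≤ prev) (hp : prev ≤ d + 1) (h1 : 1 ≤ l) (hl : l ≤ prev - 1) :
    stepQ d ψ φ prev * (Cm d φ l - Cm d φ prev) ≤ Cm d ψ l - Cm d ψ prev := by
  have hden : 0 < Cm d φ l - Cm d φ prev := Cm_diff_pos d φ hφpos h1 (by omega) hp
  have := (step_spec d ψ φ h2).2 l h1 hl
  rw [ratio] at this
  calc stepQ d ψ φ prev * (Cm d φ l - Cm d φ prev)
      ≤ (Cm d ψ l - Cm d ψ prev) / (Cm d φ l - Cm d φ prev) * (Cm d φ l - Cm d φ prev) :=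
        mul_le_mul_of_nonneg_right this hden.le
    _ = Cm d ψ l - Cm d ψ prev := div_mul_cancel₀ _ hden.ne'

lemma stepQ_mul_eq {prev : ℕ} (hφpos : ∀ i, 1 ≤ i → i ≤ d → 0 < φ i)
    (h2 : 2 ≤ prev) (hp : prev ≤ d + 1) :
    stepQ d ψ φ prev * (Cm d φ (stepL d ψ φ prev) - Cm d φ prev)
      = Cm d ψ (stepL d ψ φ prev) - Cm d ψ prev := by
  obtain ⟨⟨hs1, hs2, hsr⟩, _⟩ := step_spec d ψ φ h2
  have hden : 0 < Cm d φ (stepL d ψ φ prev) - Cm d φ prev :=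
    Cm_diff_pos d φ hφpos hs1 (by omega) hp
  rw [← hsr, ratio, div_mul_cancel₀ _ hden.ne']

end Segment
section Main

variable (d : ℕ) (ψ φ : ℕ → ℝ)

lemma main_ind (hφpos : ∀ i, 1 ≤ i → i ≤ d → 0 < φ i) :
    ∀ j, j ≤ kstop d ψ φ →
      Cm d (phif d ψ φ) (Lseq d ψ φ j) = Cm d ψ (Lseq d ψ φ j) ∧
      ∀ l, Lseq d ψ φ j ≤ l → l ≤ d → Cm d (phif d ψ φ) l ≤ Cm d ψ l := by
  intro j
  induction j with
  | zero =>
    intro _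
    constructor
    · show Cm d (phif d ψ φ) (d + 1) = Cm d ψ (d + 1)
      rw [Cm_top d _ le_rfl, Cm_top d _ le_rfl]
    · intro l hl hl'
      have h0 : Lseq d ψ φ 0 = d + 1 := rfl
      omega
  | succ j ih =>
    intro hj
    obtain ⟨iheq, ihle⟩ := ih (by omega)
    set prev := Lseq d ψ φ j with hprev
    have h2 : 2 ≤ prev := chain2 d ψ φ (by omega)
    have hp : prev ≤ d + 1 := (chain d ψ φ j (by omega)).2
    have hL' : Lseq d ψ φ (j + 1) = stepL d ψ φ prev := rfl
    obtain ⟨⟨hs1, hs2, _⟩, _⟩ := step_spec d ψ φ h2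
    rw [← hL'] at hs1 hs2
    have hseg : ∀ l, Lseq d ψ φ (j + 1) ≤ l → l ≤ prev - 1 →
        Cm d (phif d ψ φ) l = Cm d ψ prev + stepQ d ψ φ prev * (Cm d φ l - Cm d φ prev) := by
      intro l hl1 hl2
      have hdiff : Cm d (phif d ψ φ) l - Cm d (phif d ψ φ) prev
          = ∑ i ∈ Finset.Ico l prev, phif d ψ φ i := Cm_diff d _ (by omega) hp
      have hsum : ∑ i ∈ Finset.Ico l prev, phif d ψ φ i
          = stepQ d ψ φ prev * (Cm d φ l - Cm d φ prev) := by
        rw [Cm_diff d φ (by omega) hp, Finset.mul_sum]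
        apply Finset.sum_congr rfl
        intro i hi
        rw [Finset.mem_Ico] at hi
        exact phif_seg d ψ φ hj (le_trans hl1 hi.1) hi.2
      linarith [iheq, hdiff, hsum]
    constructor
    · rw [hseg _ le_rfl hs2, hL', stepQ_mul_eq d ψ φ hφpos h2 hp]
      ring
    · intro l hl1 hl2
      by_cases hcase : prev ≤ l
      · exact ihle l hcase hl2
      · have hl2' : l ≤ prev - 1 := by omega
        rw [hseg l hl1 hl2']
        have := stepQ_mul_le d ψ φ hφpos h2 hp
          (le_trans (chain d ψ φ (j+1) hj).1 hl1) hl2'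
        linarith

end Main
/-- The initial vector is majorized by the intermediate vector:
`C_l(ψ) ≥ C_l(φ^f)` for all `l ∈ {1, …, d}`, i.e. `ψ ≺ φ^f`; moreover equality
`C_{l_j}(ψ) = C_{l_j}(φ^f)` holds at each breakpoint `l_j`, `j ∈ {1, …, k}`. -/
theorem initial_majorized_by_phif (d : ℕ) (hd : 1 ≤ d) (ψ φ : ℕ → ℝ)
    (hψ : DescProb d ψ) (hφ : DescProb d φ)
    (hψpos : ∀ i, 1 ≤ i → i ≤ d → 0 < ψ i) (hφpos : ∀ i, 1 ≤ i → i ≤ d → 0 < φ i) :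
    (∀ l, 1 ≤ l → l ≤ d → Cm d (phif d ψ φ) l ≤ Cm d ψ l) ∧
      MajorizedBy d ψ (phif d ψ φ) ∧
      (∀ j, 1 ≤ j → j ≤ kstop d ψ φ →
        Cm d ψ (Lseq d ψ φ j) = Cm d (phif d ψ φ) (Lseq d ψ φ j)) := by
  have hk : Lseq d ψ φ (kstop d ψ φ) = 1 := kstop_spec d ψ φ
  obtain ⟨heq, hle0⟩ := main_ind d ψ φ hφpos (kstop d ψ φ) le_rfl
  rw [hk] at heq hle0
  have hle : ∀ l, 1 ≤ l → l ≤ d → Cm d (phif d ψ φ) l ≤ Cm d ψ l := hle0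
  refine ⟨hle, ⟨?_, ?_⟩, ?_⟩
  · intro k hk1 hk2
    have hψd : Cm d ψ 1 - Cm d ψ (k + 1) = ∑ i ∈ Finset.Icc 1 k, ψ i := by
      rw [Cm_diff d ψ (by omega) (by omega), Finset.Ico_add_one_right_eq_Icc]
    have hφd : Cm d (phif d ψ φ) 1 - Cm d (phif d ψ φ) (k + 1)
        = ∑ i ∈ Finset.Icc 1 k, phif d ψ φ i := by
      rw [Cm_diff d _ (by omega) (by omega), Finset.Ico_add_one_right_eq_Icc]
    by_cases hcase : k = d
    · have h1 : Cm d ψ (k + 1) = 0 := Cm_top d ψ (by omega)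
      have h2 : Cm d (phif d ψ φ) (k + 1) = 0 := Cm_top d _ (by omega)
      linarith
    · have := hle (k + 1) (by omega) (by omega)
      linarith
  · have h1 : Cm d ψ 1 = ∑ i ∈ Finset.Icc 1 d, ψ i := rfl
    have h2 : Cm d (phif d ψ φ) 1 = ∑ i ∈ Finset.Icc 1 d, phif d ψ φ i := rfl
    linarith
  · intro j hj1 hj2
    exact (main_ind d ψ φ hφpos j hj2).1.symm
end

section
/- Let ψ, φ ∈ ℝ^d be descending probability vectors with all entries strictly positive, let φ^∧ = ψ∧φ be their meet, and suppose there exists l ∈ {1,…,d} with C_l(ψ) ≤ C_l(φ). Then the maximal transformation probability from ψ to φ^∧ equals the maximal transformation probability from ψ to φ: min_{l ∈ {1,…,d}} C_l(ψ)/C_l(φ^∧) = min_{l ∈ {1,…,d}} C_l(ψ)/C_l(φ), and the smallest index attaining the left-hand minimum equals the smallest index attaining the right-hand minimum. -/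
open Finset

/-- The meet `p ∧ q` of two descending probability vectors in the majorization lattice,
defined componentwise via prefix sums (empty sums are `0`). -/
noncomputable def meet2 (p q : ℕ → ℝ) (i : ℕ) : ℝ :=
  min (∑ j ∈ Finset.Icc 1 i, p j) (∑ j ∈ Finset.Icc 1 i, q j) -
    min (∑ j ∈ Finset.Icc 1 (i - 1), p j) (∑ j ∈ Finset.Icc 1 (i - 1), q j)



lemma prefix_meet (ψ φ : ℕ → ℝ) (k : ℕ) :
    ∑ i ∈ Finset.Icc 1 k, meet2 ψ φ i =
      min (∑ i ∈ Finset.Icc 1 k, ψ i) (∑ i ∈ Finset.Icc 1 k, φ i) := by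
  induction k with
  | zero => simp
  | succ n ih =>
      rw [Finset.sum_Icc_succ_top (Nat.le_add_left 1 n)]
      have : meet2 ψ φ (n+1) =
          min (∑ j ∈ Finset.Icc 1 (n+1), ψ j) (∑ j ∈ Finset.Icc 1 (n+1), φ j) -
            min (∑ j ∈ Finset.Icc 1 n, ψ j) (∑ j ∈ Finset.Icc 1 n, φ j) := by
        simp [meet2]
      rw [this, ih]; ring

lemma Cm_eq (d l : ℕ) (hl : 1 ≤ l) (hld : l ≤ d) (p : ℕ → ℝ) :
    Cm d p l = (∑ i ∈ Finset.Icc 1 d, p i) - ∑ i ∈ Finset.Icc 1 (l - 1), p i := by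
  obtain ⟨m, rfl⟩ : ∃ m, l = m + 1 := ⟨l - 1, (Nat.succ_pred_eq_of_pos hl).symm⟩
  have hmd : m ≤ d := le_trans (Nat.le_succ m) hld
  have key := Finset.sum_Ioc_consecutive p (Nat.zero_le m) hmd
  have h1 : ∑ i ∈ Finset.Icc 1 d, p i = ∑ i ∈ Finset.Ioc 0 d, p i := by
    rw [← Finset.Icc_add_one_left_eq_Ioc]; rfl
  have h2 : ∑ i ∈ Finset.Icc 1 m, p i = ∑ i ∈ Finset.Ioc 0 m, p i := by
    rw [← Finset.Icc_add_one_left_eq_Ioc]; rfl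
  have h3 : Cm d p (m+1) = ∑ i ∈ Finset.Ioc m d, p i := by
    rw [Cm, ← Finset.Icc_add_one_left_eq_Ioc]
  simp only [Nat.add_sub_cancel, h1, h2, h3]
  linarith

lemma Cm_pos (d l : ℕ) (hl : 1 ≤ l) (hld : l ≤ d) (p : ℕ → ℝ)
    (hpos : ∀ i, 1 ≤ i → i ≤ d → 0 < p i) : 0 < Cm d p l := by
  apply Finset.sum_pos
  · intro i hi
    rw [Finset.mem_Icc] at hi
    exact hpos i (le_trans hl hi.1) hi.2
  · exact ⟨l, Finset.mem_Icc.2 ⟨le_rfl, hld⟩⟩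

lemma Cm_meet (d l : ℕ) (hl : 1 ≤ l) (hld : l ≤ d) (ψ φ : ℕ → ℝ)
    (hψ1 : ∑ i ∈ Finset.Icc 1 d, ψ i = 1) (hφ1 : ∑ i ∈ Finset.Icc 1 d, φ i = 1) :
    Cm d (meet2 ψ φ) l = max (Cm d ψ l) (Cm d φ l) := by
  rw [Cm_eq d l hl hld, Cm_eq d l hl hld, Cm_eq d l hl hld, prefix_meet, prefix_meet,
    hψ1, hφ1, min_self]
  rcases le_total (∑ i ∈ Finset.Icc 1 (l-1), ψ i) (∑ i ∈ Finset.Icc 1 (l-1), φ i) with h | h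
  · rw [min_eq_left h, max_eq_left (by linarith)]
  · rw [min_eq_right h, max_eq_right (by linarith)]


lemma setB_eq (d : ℕ) (F : ℕ → ℝ) :
    {x : ℝ | ∃ l, 1 ≤ l ∧ l ≤ d ∧ x = F l} = F '' (Set.Icc 1 d) := by
  ext x
  constructor
  · rintro ⟨l, h1, h2, rfl⟩; exact ⟨l, ⟨h1, h2⟩, rfl⟩
  · rintro ⟨l, ⟨h1, h2⟩, rfl⟩; exact ⟨l, h1, h2, rfl⟩

lemma main_aux (d : ℕ) (hd : 1 ≤ d) (F G : ℕ → ℝ)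
    (hFG : ∀ l, 1 ≤ l → l ≤ d → G l = min (F l) 1) (hF1 : F 1 = 1) :
    sInf {x : ℝ | ∃ l, 1 ≤ l ∧ l ≤ d ∧ x = G l} =
        sInf {x : ℝ | ∃ l, 1 ≤ l ∧ l ≤ d ∧ x = F l} ∧
      sInf {l : ℕ | 1 ≤ l ∧ l ≤ d ∧ G l = sInf {x : ℝ | ∃ l', 1 ≤ l' ∧ l' ≤ d ∧ x = G l'}} =
        sInf {l : ℕ | 1 ≤ l ∧ l ≤ d ∧ F l = sInf {x : ℝ | ∃ l', 1 ≤ l' ∧ l' ≤ d ∧ x = F l'}} := by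
  have hBeq := setB_eq d F
  have hAeq := setB_eq d G
  set B := {x : ℝ | ∃ l, 1 ≤ l ∧ l ≤ d ∧ x = F l} with hBdef
  set A := {x : ℝ | ∃ l, 1 ≤ l ∧ l ≤ d ∧ x = G l} with hAdef
  have hBfin : B.Finite := hBeq ▸ (Set.finite_Icc 1 d).image F
  have hAfin : A.Finite := hAeq ▸ (Set.finite_Icc 1 d).image G
  have hBne : B.Nonempty := ⟨F 1, 1, le_rfl, hd, rfl⟩
  have hAne : A.Nonempty := ⟨G 1, 1, le_rfl, hd, rfl⟩
  have hmemF : ∀ l, 1 ≤ l → l ≤ d → F l ∈ B := fun l h1 h2 => ⟨l, h1, h2, rfl⟩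
  set m := sInf B with hm
  have hmmem : m ∈ B := hBne.csInf_mem hBfin
  obtain ⟨l0, hl01, hl0d, hl0⟩ := hmmem
  have hmle : ∀ l, 1 ≤ l → l ≤ d → m ≤ F l := fun l h1 h2 =>
    csInf_le hBfin.bddBelow (hmemF l h1 h2)
  have hm1 : m ≤ 1 := by have := hmle 1 le_rfl hd; rwa [hF1] at this
  have hInfA : sInf A = m := by
    apply le_antisymm
    · apply csInf_le hAfin.bddBelow
      refine ⟨l0, hl01, hl0d, ?_⟩
      rw [hFG l0 hl01 hl0d, ← hl0, min_eq_left hm1]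
    · apply le_csInf hAne
      rintro x ⟨l, h1, h2, rfl⟩
      rw [hFG l h1 h2]
      exact le_min (hmle l h1 h2) hm1
  refine ⟨hInfA, ?_⟩
  rw [hInfA]
  rcases lt_or_eq_of_le hm1 with hlt | heq
  · congr 1
    ext l
    simp only [Set.mem_setOf_eq]
    constructor
    · rintro ⟨h1, h2, h3⟩
      refine ⟨h1, h2, ?_⟩
      rw [hFG l h1 h2] at h3
      rcases le_total (F l) 1 with h | h
      · rwa [min_eq_left h] at h3
      · rw [min_eq_right h] at h3; exact absurd h3.symm (ne_of_lt hlt)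
    · rintro ⟨h1, h2, h3⟩
      exact ⟨h1, h2, by rw [hFG l h1 h2, h3, min_eq_left hm1]⟩
  · have hG1 : G 1 = m := by rw [hFG 1 le_rfl hd, hF1, ← heq, min_self]
    have h1A : 1 ∈ {l : ℕ | 1 ≤ l ∧ l ≤ d ∧ G l = m} := ⟨le_rfl, hd, hG1⟩
    have h1B : 1 ∈ {l : ℕ | 1 ≤ l ∧ l ≤ d ∧ F l = m} := ⟨le_rfl, hd, by rw [hF1, heq]⟩
    have e1 : sInf {l : ℕ | 1 ≤ l ∧ l ≤ d ∧ G l = m} = 1 :=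
      le_antisymm (Nat.sInf_le h1A) ((Nat.sInf_mem ⟨1, h1A⟩).1)
    have e2 : sInf {l : ℕ | 1 ≤ l ∧ l ≤ d ∧ F l = m} = 1 :=
      le_antisymm (Nat.sInf_le h1B) ((Nat.sInf_mem ⟨1, h1B⟩).1)
    rw [e1, e2]

/-- If there is some `l` with `C_l(ψ) ≤ C_l(φ)`, then the maximal
transformation probability from `ψ` to the meet `φ^∧ = ψ ∧ φ` equals that from `ψ` to
`φ`, and the smallest minimizing indices coincide. -/
theorem meet_same_probability (d : ℕ) (hd : 1 ≤ d) (ψ φ : ℕ → ℝ)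
    (hψ : DescProb d ψ) (hφ : DescProb d φ)
    (hψpos : ∀ i, 1 ≤ i → i ≤ d → 0 < ψ i) (hφpos : ∀ i, 1 ≤ i → i ≤ d → 0 < φ i)
    (hex : ∃ l, 1 ≤ l ∧ l ≤ d ∧ Cm d ψ l ≤ Cm d φ l) :
    sInf {x : ℝ | ∃ l, 1 ≤ l ∧ l ≤ d ∧ x = Cm d ψ l / Cm d (meet2 ψ φ) l} =
        sInf {x : ℝ | ∃ l, 1 ≤ l ∧ l ≤ d ∧ x = Cm d ψ l / Cm d φ l} ∧
      sInf {l : ℕ | 1 ≤ l ∧ l ≤ d ∧ Cm d ψ l / Cm d (meet2 ψ φ) l =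
          sInf {x : ℝ | ∃ l', 1 ≤ l' ∧ l' ≤ d ∧ x = Cm d ψ l' / Cm d (meet2 ψ φ) l'}} =
        sInf {l : ℕ | 1 ≤ l ∧ l ≤ d ∧ Cm d ψ l / Cm d φ l =
          sInf {x : ℝ | ∃ l', 1 ≤ l' ∧ l' ≤ d ∧ x = Cm d ψ l' / Cm d φ l'}} := by
  refine main_aux d hd (fun l => Cm d ψ l / Cm d φ l)
    (fun l => Cm d ψ l / Cm d (meet2 ψ φ) l) ?_ ?_
  · intro l h1 h2
    show Cm d ψ l / Cm d (meet2 ψ φ) l = min (Cm d ψ l / Cm d φ l) 1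
    have hψp := Cm_pos d l h1 h2 ψ hψpos
    have hφp := Cm_pos d l h1 h2 φ hφpos
    rw [Cm_meet d l h1 h2 ψ φ hψ.sum_one hφ.sum_one]
    rcases le_total (Cm d ψ l) (Cm d φ l) with h | h
    · rw [max_eq_right h, min_eq_left ((div_le_one hφp).2 h)]
    · rw [max_eq_left h, min_eq_right ((one_le_div hφp).2 h), div_self (ne_of_gt hψp)]
  · show Cm d ψ 1 / Cm d φ 1 = 1
    have h1 : Cm d ψ 1 = 1 := hψ.sum_one
    have h2 : Cm d φ 1 = 1 := hφ.sum_one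
    rw [h1, h2]; norm_num
end
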